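/- If P is a Sylow p-subgroup of the alternating group A_n (p an odd prime, p² ≤ n), then the center Z(P) has exponent p; consequently no element of order p² in A_n centralizes a Sylow p-subgroup. -/

import Mathlib

open Equiv Equiv.Perm


lemma arith_key {p : ℕ} (hp : p.Prime) (hp3 : 3 ≤ p) {b : ℕ} (hb : 1 ≤ b) (m : ℕ) :
    2 * b + (Nat.factorization (Nat.factorial b)) p + (Nat.factorization (Nat.factorial m)) p
      < (Nat.factorization (Nat.factorial (p ^ 2 * b + m))) p := by
  haveI : Fact p.Prime := ⟨hp⟩
  have hfd : ∀ k : ℕ, (Nat.factorization (Nat.factorial k)) p = padicValNat p (Nat.factorial k) :=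
    fun k => Nat.factorization_def _ hp
  have h1 : (Nat.factorization (Nat.factorial (p ^ 2 * b))) p
      + (Nat.factorization (Nat.factorial m)) p
      ≤ (Nat.factorization (Nat.factorial (p ^ 2 * b + m))) p := by
    have hdvd := Nat.factorial_mul_factorial_dvd_factorial_add (p ^ 2 * b) m
    have h0 : Nat.factorial (p ^ 2 * b) * Nat.factorial m ≠ 0 := by positivity
    have hle := (Nat.factorization_le_iff_dvd h0 (Nat.factorial_ne_zero _)).mpr hdvd
    have := (Finsupp.le_def.mp hle) p
    rwa [Nat.factorization_mul (Nat.factorial_ne_zero _) (Nat.factorial_ne_zero _),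
      Finsupp.add_apply] at this
  have h2 : (Nat.factorization (Nat.factorial (p ^ 2 * b))) p
      = (Nat.factorization (Nat.factorial b)) p + b + p * b := by
    have e1 : p ^ 2 * b = p * (p * b) := by ring
    rw [hfd, hfd, e1, padicValNat_factorial_mul, padicValNat_factorial_mul]
  have h3 : 3 * b ≤ p * b := Nat.mul_le_mul_right b hp3
  omega

lemma key_perm {n p : ℕ} (hp : p.Prime) (hp3 : 3 ≤ p)
    {u : Equiv.Perm (Fin n)} (hu : orderOf u = p ^ 2)
    {Q : Subgroup (Equiv.Perm (Fin n))} (hQp : IsPGroup p Q)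
    (hle : Q ≤ Subgroup.centralizer {u}) :
    ¬ p ^ (Nat.factorization (Nat.factorial n)) p ∣ Nat.card Q := by
  classical
  haveI : Fact p.Prime := ⟨hp⟩
  intro hdvd
  set T : Finset (Fin n) := (u ^ p).support with hT
  set Cf : Finset (Perm (Fin n)) :=
    u.cycleFactorsFinset.filter (fun c => c.support.card = p ^ 2) with hCf
  set b : ℕ := Cf.card with hb
  -- basic membership
  have hmemT : ∀ x : Fin n, x ∈ T ↔ ∃ c ∈ Cf, x ∈ c.support := by
    intro x
    constructor
    · intro hx
      have hxu : x ∈ u.support := Equiv.Perm.support_pow_le u p hx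
      have hxu' : u x ≠ x := Equiv.Perm.mem_support.mp hxu
      have hcmem : u.cycleOf x ∈ u.cycleFactorsFinset :=
        Equiv.Perm.cycleOf_mem_cycleFactorsFinset_iff.mpr hxu
      have hcyc : (u.cycleOf x).IsCycle := Equiv.Perm.isCycle_cycleOf u hxu'
      have hdvd2 : (u.cycleOf x).support.card ∣ p ^ 2 := by
        rw [← hu, ← Equiv.Perm.lcm_cycleType]
        apply Multiset.dvd_lcm
        rw [Equiv.Perm.cycleType_def]
        exact Multiset.mem_map.mpr ⟨u.cycleOf x, by simpa using hcmem, rfl⟩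
      obtain ⟨i, hi2, hieq⟩ := (Nat.dvd_prime_pow hp).mp hdvd2
      have hxc : x ∈ (u.cycleOf x).support := by
        rw [Equiv.Perm.mem_support_cycleOf_iff]
        exact ⟨Equiv.Perm.SameCycle.refl _ _, hxu⟩
      have hi2' : i = 2 := by
        by_contra hne
        have hile : i ≤ 1 := by omega
        have hpow : (u.cycleOf x) ^ p = 1 := by
          apply orderOf_dvd_iff_pow_eq_one.mp
          rw [hcyc.orderOf, hieq]
          calc p ^ i ∣ p ^ 1 := pow_dvd_pow p hile
          _ = p := pow_one p
        have : (u ^ p) x = x := by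
          rw [← Equiv.Perm.cycleOf_pow_apply_self u x p, hpow]; rfl
        exact (Equiv.Perm.mem_support.mp hx) this
      refine ⟨u.cycleOf x, ?_, hxc⟩
      rw [hCf, Finset.mem_filter]
      exact ⟨hcmem, by rw [hieq, hi2']⟩
    · rintro ⟨c, hc, hxc⟩
      rw [hCf, Finset.mem_filter] at hc
      have hceq : c = u.cycleOf x := Equiv.Perm.cycle_is_cycleOf hxc hc.1
      have hcyc : c.IsCycle := (Equiv.Perm.mem_cycleFactorsFinset_iff.mp hc.1).1
      rw [Equiv.Perm.mem_support]
      intro hfix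
      have hcpx : (c ^ p) x = x := by
        rw [hceq, Equiv.Perm.cycleOf_pow_apply_self u x p]
        exact hfix
      have hcx : c x ≠ x := Equiv.Perm.mem_support.mp hxc
      have h1 : c ^ p = 1 := (hcyc.pow_eq_one_iff' hcx).mpr hcpx
      have : p ^ 2 ∣ p := by
        rw [← hc.2, ← hcyc.orderOf]
        exact orderOf_dvd_iff_pow_eq_one.mpr h1
      have := Nat.le_of_dvd hp.pos this
      nlinarith
  -- T as a union
  have hTb : T = Cf.biUnion Equiv.Perm.support := by
    ext x
    rw [hmemT x, Finset.mem_biUnion]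
  have hdisj : (Cf : Set (Perm (Fin n))).Pairwise fun a c => Disjoint a.support c.support := by
    intro a ha c hc hac
    have ha' : a ∈ u.cycleFactorsFinset := (Finset.mem_filter.mp ha).1
    have hc' : c ∈ u.cycleFactorsFinset := (Finset.mem_filter.mp hc).1
    exact (Equiv.Perm.cycleFactorsFinset_pairwise_disjoint u ha' hc' hac).disjoint_support
  have hTcard : T.card = p ^ 2 * b := by
    rw [hTb, Finset.card_biUnion (fun a ha c hc hac => hdisj ha hc hac)]
    rw [Finset.sum_congr rfl (fun c hc => (Finset.mem_filter.mp hc).2)]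
    rw [Finset.sum_const, smul_eq_mul, hb]
    ring
  have hb1 : 1 ≤ b := by
    have hup : u ^ p ≠ 1 := by
      intro h1
      have : p ^ 2 ∣ p := hu ▸ orderOf_dvd_iff_pow_eq_one.mpr h1
      have := Nat.le_of_dvd hp.pos this
      nlinarith
    obtain ⟨x, hx⟩ := Finset.nonempty_iff_ne_empty.mpr
      (fun he => hup (Equiv.Perm.support_eq_empty_iff.mp he))
    obtain ⟨c, hc, -⟩ := (hmemT x).mp hx
    exact Finset.card_pos.mpr ⟨c, hc⟩
  -- commuting
  have hqu : ∀ q : Q, Commute ((q : Perm (Fin n))) u := fun q =>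
    Subgroup.mem_centralizer_singleton_iff.mp (hle q.2)
  have hstab : ∀ q : Q, ∀ x : Fin n, x ∉ T ↔ (q : Perm (Fin n)) x ∉ T := by
    intro q x
    apply not_congr
    have hcomm : (q : Perm (Fin n)) * (u ^ p) * (q : Perm (Fin n))⁻¹ = u ^ p := by
      have h := ((hqu q).pow_right p).eq
      rw [h]; group
    have hmap : T = T.map (q : Perm (Fin n)).toEmbedding := by
      conv_lhs => rw [hT, ← hcomm, Equiv.Perm.support_conj]
    have : (q : Perm (Fin n)) x ∈ T ↔ x ∈ T := by
      conv_lhs => rw [hmap, Finset.mem_map_equiv]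
      simp
    exact this.symm
  let φ : Q →* Perm {x : Fin n // x ∉ T} :=
    { toFun := fun q => Equiv.Perm.subtypePerm (q : Perm (Fin n)) (fun x => (hstab q x).symm)
      map_one' := by
        apply Equiv.ext; rintro ⟨x, hx⟩; apply Subtype.ext; simp
      map_mul' := fun q r => by
        apply Equiv.ext; rintro ⟨x, hx⟩; apply Subtype.ext; simp; rfl }
  have hφ_apply : ∀ (q : Q) (x : Fin n) (hx : x ∉ T),
      (φ q ⟨x, hx⟩ : Fin n) = (q : Perm (Fin n)) x := fun q x hx => rfl
  have hkerφ : ∀ q : Q, q ∈ φ.ker ↔ ∀ x : Fin n, x ∉ T → (q : Perm (Fin n)) x = x := by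
    intro q
    rw [MonoidHom.mem_ker]
    constructor
    · intro h x hx
      have h2 := Equiv.ext_iff.mp h ⟨x, hx⟩
      have := Subtype.ext_iff.mp h2
      rwa [hφ_apply q x hx] at this
    · intro h
      apply Equiv.ext; rintro ⟨x, hx⟩; apply Subtype.ext
      rw [hφ_apply q x hx]
      simpa using h x hx
  -- conjugation preserves Cf
  have hconjmem : ∀ g : Perm (Fin n), g ∈ Subgroup.centralizer {u} →
      ∀ c ∈ Cf, g * c * g⁻¹ ∈ Cf := by
    intro g hg c hc
    rw [hCf, Finset.mem_filter] at hc ⊢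
    have hgu : g * u * g⁻¹ = u := by
      have h := Subgroup.mem_centralizer_singleton_iff.mp hg
      rw [h]; group
    constructor
    · have h2 := (Equiv.Perm.mem_cycleFactorsFinset_conj u g c).mpr hc.1
      rwa [hgu] at h2
    · rw [Equiv.Perm.card_support_conj]; exact hc.2
  let ψ : φ.ker →* Perm {c : Perm (Fin n) // c ∈ Cf} :=
    { toFun := fun k =>
        { toFun := fun c => ⟨((k : Q) : Perm (Fin n)) * c.1 * ((k : Q) : Perm (Fin n))⁻¹,
            hconjmem _ (hle (k : Q).2) c.1 c.2⟩
          invFun := fun c => ⟨((k : Q) : Perm (Fin n))⁻¹ * c.1 * ((k : Q) : Perm (Fin n)),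
            by
              have h := hconjmem (((k : Q) : Perm (Fin n)))⁻¹
                (inv_mem (hle (k : Q).2)) c.1 c.2
              simpa using h⟩
          left_inv := fun c => by apply Subtype.ext; simp [mul_assoc]
          right_inv := fun c => by apply Subtype.ext; simp [mul_assoc] }
      map_one' := by apply Equiv.ext; rintro ⟨c, hc⟩; apply Subtype.ext; simp
      map_mul' := fun k l => by
        apply Equiv.ext; rintro ⟨c, hc⟩; apply Subtype.ext
        simp [mul_assoc] }
  have hψ_apply : ∀ (k : φ.ker) (c : {c : Perm (Fin n) // c ∈ Cf}),
      (ψ k c : Perm (Fin n)) =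
        ((k : Q) : Perm (Fin n)) * c.1 * ((k : Q) : Perm (Fin n))⁻¹ := fun k c => rfl
  have hkerψ : ∀ k : φ.ker, k ∈ ψ.ker →
      ∀ c ∈ Cf, Commute ((k : Q) : Perm (Fin n)) c := by
    intro k hk c hc
    have h1 := Equiv.ext_iff.mp (MonoidHom.mem_ker.mp hk) ⟨c, hc⟩
    have h2 := Subtype.ext_iff.mp h1
    rw [hψ_apply] at h2
    have h3 : ((k : Q) : Perm (Fin n)) * c * ((k : Q) : Perm (Fin n))⁻¹ = c := h2
    calc ((k : Q) : Perm (Fin n)) * c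
        = (((k : Q) : Perm (Fin n)) * c * ((k : Q) : Perm (Fin n))⁻¹) *
          ((k : Q) : Perm (Fin n)) := by group
    _ = c * ((k : Q) : Perm (Fin n)) := by rw [h3]
  -- choose a point in each cycle
  have hptex : ∀ c : {c : Perm (Fin n) // c ∈ Cf}, ∃ x, x ∈ c.1.support := by
    intro c
    have hcard := (Finset.mem_filter.mp c.2).2
    have hpos : 0 < c.1.support.card := by
      rw [hcard]; positivity
    obtain ⟨x, hx⟩ := Finset.card_pos.mp hpos
    exact ⟨x, hx⟩
  choose pt hpt using hptex
  -- injection from the kernel of ψ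
  have hinj : ∃ θ : ψ.ker → (∀ c : {c : Perm (Fin n) // c ∈ Cf}, {x : Fin n // x ∈ c.1.support}),
      Function.Injective θ := by
    have hmemsupp : ∀ (k : ψ.ker) (c : {c : Perm (Fin n) // c ∈ Cf}),
        (((k : φ.ker) : Q) : Perm (Fin n)) (pt c) ∈ c.1.support := by
      intro k c
      have hcom := hkerψ (k : φ.ker) k.2 c.1 c.2
      rw [Equiv.Perm.mem_support]
      have h1 : c.1 ((((k : φ.ker) : Q) : Perm (Fin n)) (pt c))
          = (((k : φ.ker) : Q) : Perm (Fin n)) (c.1 (pt c)) := by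
        have := hcom.symm.eq
        calc c.1 ((((k : φ.ker) : Q) : Perm (Fin n)) (pt c))
            = (c.1 * (((k : φ.ker) : Q) : Perm (Fin n))) (pt c) := rfl
        _ = ((((k : φ.ker) : Q) : Perm (Fin n)) * c.1) (pt c) := by rw [this]
        _ = (((k : φ.ker) : Q) : Perm (Fin n)) (c.1 (pt c)) := rfl
      rw [h1]
      intro h2
      exact Equiv.Perm.mem_support.mp (hpt c)
        ((((k : φ.ker) : Q) : Perm (Fin n)).injective h2)
    refine ⟨fun k => fun c => ⟨(((k : φ.ker) : Q) : Perm (Fin n)) (pt c), hmemsupp k c⟩, ?_⟩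
    intro k l h
    have hagree : ∀ c : {c : Perm (Fin n) // c ∈ Cf},
        (((k : φ.ker) : Q) : Perm (Fin n)) (pt c) = (((l : φ.ker) : Q) : Perm (Fin n)) (pt c) := by
      intro c
      have := congrFun h c
      exact Subtype.ext_iff.mp this
    apply Subtype.ext; apply Subtype.ext; apply Subtype.ext
    apply Equiv.ext
    intro x
    by_cases hx : x ∈ T
    · obtain ⟨c, hc, hxc⟩ := (hmemT x).mp hx
      have hcyc : c.IsCycle :=
        (Equiv.Perm.mem_cycleFactorsFinset_iff.mp (Finset.mem_filter.mp hc).1).1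
      have hptc := hpt ⟨c, hc⟩
      obtain ⟨i, hi⟩ := hcyc.exists_pow_eq (Equiv.Perm.mem_support.mp hptc)
        (Equiv.Perm.mem_support.mp hxc)
      have hck : Commute (((k : φ.ker) : Q) : Perm (Fin n)) (c ^ i) :=
        (hkerψ (k : φ.ker) k.2 c hc).pow_right i
      have hcl : Commute (((l : φ.ker) : Q) : Perm (Fin n)) (c ^ i) :=
        (hkerψ (l : φ.ker) l.2 c hc).pow_right i
      calc (((k : φ.ker) : Q) : Perm (Fin n)) x
          = ((((k : φ.ker) : Q) : Perm (Fin n)) * c ^ i) (pt ⟨c, hc⟩) := by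
            rw [Equiv.Perm.mul_apply, hi]
      _ = (c ^ i * (((k : φ.ker) : Q) : Perm (Fin n))) (pt ⟨c, hc⟩) := by rw [hck.eq]
      _ = (c ^ i) ((((k : φ.ker) : Q) : Perm (Fin n)) (pt ⟨c, hc⟩)) := rfl
      _ = (c ^ i) ((((l : φ.ker) : Q) : Perm (Fin n)) (pt ⟨c, hc⟩)) := by rw [hagree ⟨c, hc⟩]
      _ = (c ^ i * (((l : φ.ker) : Q) : Perm (Fin n))) (pt ⟨c, hc⟩) := rfl
      _ = ((((l : φ.ker) : Q) : Perm (Fin n)) * c ^ i) (pt ⟨c, hc⟩) := by rw [hcl.eq]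
      _ = (((l : φ.ker) : Q) : Perm (Fin n)) x := by rw [Equiv.Perm.mul_apply, hi]
    · have hk1 := (hkerφ ((k : φ.ker) : Q)).mp ((k : φ.ker).2) x hx
      have hl1 := (hkerφ ((l : φ.ker) : Q)).mp ((l : φ.ker).2) x hx
      rw [hk1, hl1]
  -- p-group facts
  have hkerφp : IsPGroup p φ.ker := hQp.to_subgroup φ.ker
  have hrangeφp : IsPGroup p φ.range := by
    rw [MonoidHom.range_eq_map]
    exact (hQp.to_subgroup ⊤).map φ
  have hkerψp : IsPGroup p ψ.ker := hkerφp.to_subgroup ψ.ker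
  have hrangeψp : IsPGroup p ψ.range := by
    rw [MonoidHom.range_eq_map]
    exact (hkerφp.to_subgroup ⊤).map ψ
  -- generic Sylow bound
  have hboundR : ∀ (X : Type) [Fintype X] [DecidableEq X] (R : Subgroup (Perm X)),
      IsPGroup p R →
      Nat.card R ∣ p ^ (Nat.factorization (Nat.factorial (Fintype.card X))) p := by
    intro X _ _ R hR
    obtain ⟨Syl, hSyl⟩ := hR.exists_le_sylow
    have hdd := Subgroup.card_dvd_of_le hSyl
    rwa [Sylow.card_eq_multiplicity, Nat.card_eq_fintype_card (α := Equiv.Perm X), Fintype.card_perm] at hdd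
  -- cardinalities
  obtain ⟨e2, he2⟩ := IsPGroup.iff_card.mp hrangeφp
  obtain ⟨e3, he3⟩ := IsPGroup.iff_card.mp hkerψp
  obtain ⟨e4, he4⟩ := IsPGroup.iff_card.mp hrangeψp
  have hTle : p ^ 2 * b ≤ n := by
    rw [← hTcard]
    calc T.card ≤ Fintype.card (Fin n) := Finset.card_le_univ T
    _ = n := Fintype.card_fin n
  have hcard1 : Fintype.card {x : Fin n // x ∉ T} = n - p ^ 2 * b := by
    have h := Fintype.card_subtype_compl (fun x : Fin n => x ∈ T)
    simp only [Fintype.card_fin, Fintype.card_coe] at h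
    rw [h, hTcard]
  have hcard2 : Fintype.card {c : Perm (Fin n) // c ∈ Cf} = b := Fintype.card_coe Cf
  -- bound e2
  have hbe2 : e2 ≤ (Nat.factorization (Nat.factorial (n - p ^ 2 * b))) p := by
    have h := hboundR {x : Fin n // x ∉ T} φ.range hrangeφp
    rw [he2, hcard1] at h
    exact (Nat.pow_dvd_pow_iff_le_right hp.one_lt).mp h
  -- bound e4
  have hbe4 : e4 ≤ (Nat.factorization (Nat.factorial b)) p := by
    have h := hboundR {c : Perm (Fin n) // c ∈ Cf} ψ.range hrangeψp
    rw [he4, hcard2] at h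
    exact (Nat.pow_dvd_pow_iff_le_right hp.one_lt).mp h
  -- bound e3
  have hbe3 : e3 ≤ 2 * b := by
    obtain ⟨θ, hθ⟩ := hinj
    have h := Nat.card_le_card_of_injective θ hθ
    have hpi : Nat.card (∀ c : {c : Perm (Fin n) // c ∈ Cf}, {x : Fin n // x ∈ c.1.support})
        = p ^ (2 * b) := by
      rw [Nat.card_pi]
      have : ∀ c : {c : Perm (Fin n) // c ∈ Cf},
          Nat.card {x : Fin n // x ∈ c.1.support} = p ^ 2 := by
        intro c
        rw [Nat.card_eq_fintype_card, Fintype.card_coe]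
        exact (Finset.mem_filter.mp c.2).2
      rw [Finset.prod_congr rfl (fun c _ => this c), Finset.prod_const, Finset.card_univ,
        hcard2, ← pow_mul, mul_comm]
    rw [he3, hpi] at h
    exact (Nat.pow_le_pow_iff_right hp.one_lt).mp h
  -- assemble
  have hc1 : Nat.card Q = Nat.card φ.range * Nat.card φ.ker := by
    rw [Subgroup.card_eq_card_quotient_mul_card_subgroup φ.ker,
      Nat.card_congr (QuotientGroup.quotientKerEquivRange φ).toEquiv]
  have hc2 : Nat.card φ.ker = Nat.card ψ.range * Nat.card ψ.ker := by
    rw [Subgroup.card_eq_card_quotient_mul_card_subgroup ψ.ker,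
      Nat.card_congr (QuotientGroup.quotientKerEquivRange ψ).toEquiv]
  have hQcard : Nat.card Q = p ^ (e2 + e4 + e3) := by
    rw [hc1, hc2, he2, he3, he4]
    ring
  rw [hQcard] at hdvd
  have hlead : (Nat.factorization (Nat.factorial n)) p ≤ e2 + e4 + e3 :=
    (Nat.pow_dvd_pow_iff_le_right hp.one_lt).mp hdvd
  have harith := arith_key hp hp3 hb1 (n - p ^ 2 * b)
  rw [Nat.add_sub_cancel' hTle] at harith
  omega

theorem stmt_12 (n p : ℕ) (hp : p.Prime) (hodd : Odd p) (hp2 : p ^ 2 ≤ n)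
    (P : Sylow p (alternatingGroup (Fin n))) :
    (∀ z : (P : Subgroup (alternatingGroup (Fin n))),
        z ∈ Subgroup.center (P : Subgroup (alternatingGroup (Fin n))) → z ^ p = 1) ∧
    ∀ x : alternatingGroup (Fin n), orderOf x = p ^ 2 →
      ¬ (∀ y ∈ (P : Subgroup (alternatingGroup (Fin n))), Commute x y) := by
  classical
  haveI : Fact p.Prime := ⟨hp⟩
  have hp3 : 3 ≤ p := by
    have h2 := hp.two_le
    by_contra h
    push_neg at h
    interval_cases p
    exact absurd hodd (by decide)
  have hn9 : 9 ≤ n := le_trans (by nlinarith) hp2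
  haveI : Nontrivial (Fin n) := ⟨⟨⟨0, by omega⟩, ⟨1, by omega⟩, by simp [Fin.ext_iff]⟩⟩
  have hcardA : (Nat.factorization (Nat.card (alternatingGroup (Fin n)))) p
      = (Nat.factorization (Nat.factorial n)) p := by
    have h2 : 2 * Fintype.card (alternatingGroup (Fin n)) = Nat.factorial n := by
      rw [two_mul_card_alternatingGroup, Fintype.card_perm, Fintype.card_fin]
    have hA0 : Fintype.card (alternatingGroup (Fin n)) ≠ 0 := Fintype.card_ne_zero
    have hf2 : (Nat.factorization 2) p = 0 :=
      Nat.factorization_eq_zero_of_not_dvd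
        (fun hdd => by have := Nat.le_of_dvd (by norm_num) hdd; omega)
    rw [Nat.card_eq_fintype_card, ← h2, Nat.factorization_mul (by norm_num) hA0,
      Finsupp.add_apply, hf2, zero_add]
  have part1 : ∀ z : (P : Subgroup (alternatingGroup (Fin n))),
      z ∈ Subgroup.center (P : Subgroup (alternatingGroup (Fin n))) → z ^ p = 1 := by
    intro z hz
    obtain ⟨k, hk⟩ := P.2 z
    obtain ⟨m, hmk, hord⟩ := (Nat.dvd_prime_pow hp).mp (orderOf_dvd_of_pow_eq_one hk)
    by_cases hm : m ≤ 1
    · apply orderOf_dvd_iff_pow_eq_one.mp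
      rw [hord]
      calc p ^ m ∣ p ^ 1 := pow_dvd_pow p hm
      _ = p := pow_one p
    · exfalso
      push_neg at hm
      set w := z ^ p ^ (m - 2) with hw
      have hordw : orderOf w = p ^ 2 := by
        rw [hw, orderOf_pow, hord]
        have hg : Nat.gcd (p ^ m) (p ^ (m - 2)) = p ^ (m - 2) :=
          Nat.gcd_eq_right (pow_dvd_pow p (by omega))
        rw [hg, Nat.pow_div (by omega) hp.pos]
        congr 1
        omega
      have hwc : w ∈ Subgroup.center (P : Subgroup (alternatingGroup (Fin n))) :=
        Subgroup.pow_mem _ hz _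
      set u : Equiv.Perm (Fin n) :=
        ((w : alternatingGroup (Fin n)) : Equiv.Perm (Fin n)) with hu
      have hordu : orderOf u = p ^ 2 := by
        rw [hu, ← hordw]
        rw [orderOf_submonoid, orderOf_submonoid]
      set Q : Subgroup (Equiv.Perm (Fin n)) :=
        Subgroup.map (alternatingGroup (Fin n)).subtype
          (P : Subgroup (alternatingGroup (Fin n))) with hQ
      have hQp : IsPGroup p Q := P.2.map _
      have hleQ : Q ≤ Subgroup.centralizer {u} := by
        rintro g ⟨y, hy, rfl⟩
        rw [Subgroup.mem_centralizer_singleton_iff]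
        have hcom := (Subgroup.mem_center_iff.mp hwc) ⟨y, hy⟩
        have h1 := Subtype.ext_iff.mp hcom
        simp only [Subgroup.coe_mul] at h1
        have h2 := Subtype.ext_iff.mp h1
        simp only [Subgroup.coe_mul] at h2
        simpa using h2
      have hdvd : p ^ (Nat.factorization (Nat.factorial n)) p ∣ Nat.card Q := by
        have hcongr : Nat.card Q
            = Nat.card (P : Subgroup (alternatingGroup (Fin n))) :=
          (Nat.card_congr
            (Subgroup.equivMapOfInjective _ _ Subtype.coe_injective).toEquiv).symm
        rw [hcongr, P.card_eq_multiplicity, hcardA]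
      exact key_perm hp hp3 hordu hQp hleQ hdvd
  refine ⟨part1, ?_⟩
  intro x hx hcomm
  have hzp : IsPGroup p (Subgroup.zpowers x) :=
    IsPGroup.of_card (by rw [Nat.card_zpowers, hx])
  have hxnorm : Subgroup.zpowers x ≤ Subgroup.normalizer
      ((P : Subgroup (alternatingGroup (Fin n))) : Set (alternatingGroup (Fin n))) := by
    rw [Subgroup.zpowers_le, Subgroup.mem_normalizer_iff]
    intro h
    constructor
    · intro hh
      have he := (hcomm h hh).eq
      rw [show x * h * x⁻¹ = h from by rw [he]; group]
      exact hh
    · intro hh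
      have h2 := (hcomm _ hh).eq
      have h3 : x * h * x⁻¹ = h :=
        mul_left_cancel (a := x) (by rw [h2]; group)
      rwa [← h3]
  have hLp : IsPGroup p
      (((P : Subgroup (alternatingGroup (Fin n))) ⊔ Subgroup.zpowers x :
        Subgroup (alternatingGroup (Fin n)))) :=
    IsPGroup.to_sup_of_normal_left' P.2 hzp hxnorm
  have hL : ((P : Subgroup (alternatingGroup (Fin n))) ⊔ Subgroup.zpowers x)
      = (P : Subgroup (alternatingGroup (Fin n))) :=
    P.3 hLp le_sup_left
  have hxP : x ∈ (P : Subgroup (alternatingGroup (Fin n))) := by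
    rw [← hL]
    exact (le_sup_right : Subgroup.zpowers x ≤ _) (Subgroup.mem_zpowers x)
  have hxcen : (⟨x, hxP⟩ : (P : Subgroup (alternatingGroup (Fin n)))) ∈
      Subgroup.center (P : Subgroup (alternatingGroup (Fin n))) := by
    rw [Subgroup.mem_center_iff]
    intro g
    apply Subtype.ext
    simp only [Subgroup.coe_mul]
    exact ((hcomm g.1 g.2).eq).symm
  have hp1 := part1 ⟨x, hxP⟩ hxcen
  have hxp1 : x ^ p = 1 := by
    have h2 := Subtype.ext_iff.mp hp1
    simpa using h2
  have hdd : p ^ 2 ∣ p := hx ▸ orderOf_dvd_iff_pow_eq_one.mpr hxp1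
  have := Nat.le_of_dvd hp.pos hdd
  nlinarith
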